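/- The minimum value p_th of the total transmit power in the power minimization problem equals C_1/g_jam − (λ_r/g_jam) Σ_n C_{2,n}^2 g_radar,n + λ_r Σ_n C_{2,n}^2, where C_1 = N(|h_sd|^2 p_s − σ^2 γ_s)/γ_s and C_{2,n}^2 = γ_r σ̃^2/(β_n^2 g_n). -/

import Mathlib

/-- Theorem 2 (eq. (29)): the minimum total transmit power of the power
minimization LP equals
`p_th = C₁/g_jam − (λ_r/g_jam) Σ C_{2,n}² g_radar,n + λ_r Σ C_{2,n}²`,
where `C₁ = N(|h_sd|² p_s − σ² γ_s)/γ_s` and `C_{2,n}² = γ_r σ̃²/(β_n² g_n)`. -/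
theorem minimum_total_power (N : ℕ) (hN : 1 ≤ N)
    (lamr gjam : ℝ) (gr : Fin N → ℝ)
    (hlam : 0 < lamr) (hgr : ∀ n, 0 ≤ gr n) (hgjam : ∀ n, gr n < gjam)
    (hsd : ℂ) (ps sigma2 gammas gammar sigmat2 : ℝ)
    (hps : 0 < ps) (hsig : 0 < sigma2) (hgs : 0 < gammas) (hgamr : 0 < gammar)
    (hsigt : 0 < sigmat2) (beta g : Fin N → ℝ)
    (hbeta : ∀ n, 0 < beta n) (hg : ∀ n, 0 < g n)
    (C1 : ℝ) (hC1 : C1 = N * (‖hsd‖ ^ 2 * ps - sigma2 * gammas) / gammas)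
    (C2sq : Fin N → ℝ)
    (hC2sq : ∀ n, C2sq n = gammar * sigmat2 / ((beta n) ^ 2 * g n))
    (hfeas : lamr * ∑ n, C2sq n * gr n ≤ C1)
    (pth : ℝ)
    (hpth : pth = C1 / gjam - (lamr / gjam) * ∑ n, C2sq n * gr n +
      lamr * ∑ n, C2sq n) :
    IsLeast {p : ℝ | ∃ xj xr : Fin N → ℝ, (∀ n, 0 ≤ xj n) ∧
      (∀ n, C2sq n ≤ xr n) ∧
      (∑ n, lamr * (xj n * gjam + xr n * gr n) = C1) ∧
      p = ∑ n, lamr * (xj n + xr n)} pth := by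
  have n0 : Fin N := ⟨0, hN⟩
  have hgjam0 : 0 < gjam := (hgr n0).trans_lt (hgjam n0)
  constructor
  · -- membership
    set t : ℝ := (C1 - lamr * ∑ n, C2sq n * gr n) / (lamr * gjam) with ht
    refine ⟨fun n => if n = n0 then t else 0, C2sq, ?_, fun n => le_refl _, ?_, ?_⟩
    · intro n
      by_cases h : n = n0 <;> simp [h]
      exact div_nonneg (by linarith) (mul_pos hlam hgjam0).le
    · have hsum : ∑ n, (if n = n0 then t else 0) = t := by
        rw [Finset.sum_ite_eq' Finset.univ n0 (fun _ => t)]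
        simp
      have : ∑ n, lamr * ((if n = n0 then t else 0) * gjam + C2sq n * gr n)
          = lamr * gjam * (∑ n, (if n = n0 then t else 0)) + lamr * ∑ n, C2sq n * gr n := by
        rw [Finset.mul_sum, Finset.mul_sum, ← Finset.sum_add_distrib]
        exact Finset.sum_congr rfl fun n _ => by ring
      rw [this, hsum, ht]
      field_simp
      ring
    · have hsum : ∑ n, (if n = n0 then t else 0) = t := by
        rw [Finset.sum_ite_eq' Finset.univ n0 (fun _ => t)]
        simp
      have : ∑ n, lamr * ((if n = n0 then t else 0) + C2sq n)
          = lamr * (∑ n, (if n = n0 then t else 0)) + lamr * ∑ n, C2sq n := by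
        rw [Finset.mul_sum, Finset.mul_sum, ← Finset.sum_add_distrib]
        exact Finset.sum_congr rfl fun n _ => by ring
      rw [this, hsum, ht, hpth]
      field_simp
  · rintro p ⟨xj, xr, hxj, hxr, hcon, hp⟩
    have hcon' : lamr * gjam * ∑ n, xj n + lamr * ∑ n, xr n * gr n = C1 := by
      rw [← hcon, Finset.mul_sum, Finset.mul_sum, ← Finset.sum_add_distrib]
      exact Finset.sum_congr rfl fun n _ => by ring
    have hp' : p = lamr * ∑ n, xj n + lamr * ∑ n, xr n := by
      rw [hp, Finset.mul_sum, Finset.mul_sum, ← Finset.sum_add_distrib]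
      exact Finset.sum_congr rfl fun n _ => by ring
    have hS : 0 ≤ ∑ n, (xr n - C2sq n) * (gjam - gr n) :=
      Finset.sum_nonneg fun n _ =>
        mul_nonneg (by linarith [hxr n]) (by linarith [hgjam n])
    have hexp : ∑ n, (xr n - C2sq n) * (gjam - gr n)
        = gjam * ∑ n, xr n - ∑ n, xr n * gr n - gjam * ∑ n, C2sq n
          + ∑ n, C2sq n * gr n := by
      rw [Finset.mul_sum, Finset.mul_sum, ← Finset.sum_sub_distrib,
        ← Finset.sum_sub_distrib, ← Finset.sum_add_distrib]
      exact Finset.sum_congr rfl fun n _ => by ring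
    have key : gjam * (p - pth) = lamr * ∑ n, (xr n - C2sq n) * (gjam - gr n) := by
      rw [hp', hpth, hexp, ← hcon']
      field_simp
      ring
    nlinarith [mul_nonneg hlam.le hS, key, hgjam0]
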